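/- Let K₀ be a smooth o-symmetric convex domain in ℝ². If S ⊆ ∂K₀ is a separable point set with |S| ≥ 3, then the origin lies in the convex hull of S. -/

import Mathlib

open scoped Pointwise

private lemma sep_parallel (x y : EuclideanSpace ℝ (Fin 2)) (hy : y ≠ 0)
    (h : x 0 * y 1 = x 1 * y 0) : ∃ r : ℝ, x = r • y := by
  have hy' : y 0 ≠ 0 ∨ y 1 ≠ 0 := by
    by_contra hc
    push_neg at hc
    exact hy (by ext i; fin_cases i <;> simp [hc.1, hc.2])
  rcases hy' with h0 | h1
  · exact ⟨x 0 / y 0, by ext i; fin_cases i <;> simp [PiLp.smul_apply] <;> field_simp <;> nlinarith⟩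
  · exact ⟨x 1 / y 1, by ext i; fin_cases i <;> simp [PiLp.smul_apply] <;> field_simp <;> nlinarith⟩

private lemma sep_cramer (a b c : EuclideanSpace ℝ (Fin 2)) :
    (a 0 * c 1 - a 1 * c 0) • b
      = (b 0 * c 1 - b 1 * c 0) • a + (a 0 * b 1 - a 1 * b 0) • c := by
  ext i
  fin_cases i <;> simp [PiLp.smul_apply, PiLp.add_apply] <;> ring

private lemma sep_expand {r s t : ℝ} {x y z : EuclideanSpace ℝ (Fin 2)} (hr : r ≠ 0)
    (h : r • y = s • x + t • z) : y = (s / r) • x + (t / r) • z := by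
  rw [div_eq_inv_mul, div_eq_inv_mul, ← smul_smul, ← smul_smul, ← smul_add, ← h, smul_smul,
    inv_mul_cancel₀ hr, one_smul]

theorem origin_mem_convexHull_of_separable_point_set
    (K : Set (EuclideanSpace ℝ (Fin 2)))
    (hconv : Convex ℝ K) (hcomp : IsCompact K) (hint : (interior K).Nonempty)
    (hsymm : K = -K)
    (F : EuclideanSpace ℝ (Fin 2) → (EuclideanSpace ℝ (Fin 2) →L[ℝ] ℝ))
    (hFnorm : ∀ p ∈ frontier K, ‖F p‖ = 1)
    (hFsupp : ∀ p ∈ frontier K, ∀ x ∈ K, F p x ≤ F p p)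
    (hsmooth : ∀ p ∈ frontier K, ∀ g : EuclideanSpace ℝ (Fin 2) →L[ℝ] ℝ,
      ‖g‖ = 1 → (∀ x ∈ K, g x ≤ g p) → g = F p)
    (S : Set (EuclideanSpace ℝ (Fin 2))) (hS : S ⊆ frontier K)
    (hsep : ∀ x ∈ S, ∀ y ∈ S, x ≠ y →
      ¬ (x ∈ frontier K ∧ 0 < F y x ∧ F y x ≤ F y y))
    (h3 : ∃ a b c, a ∈ S ∧ b ∈ S ∧ c ∈ S ∧ a ≠ b ∧ a ≠ c ∧ b ≠ c) :
    (0 : EuclideanSpace ℝ (Fin 2)) ∈ convexHull ℝ S := by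
  obtain ⟨a, b, c, haS, hbS, hcS, hab, hac, hbc⟩ := h3
  -- the origin is interior to K
  have hK0 : (0 : EuclideanSpace ℝ (Fin 2)) ∈ interior K := by
    obtain ⟨x, hx⟩ := hint
    have hx' : -x ∈ interior K := by
      rw [hsymm]
      have h := Homeomorph.preimage_interior (Homeomorph.neg (EuclideanSpace ℝ (Fin 2))) K
      have h2 : (⇑(Homeomorph.neg (EuclideanSpace ℝ (Fin 2))) ⁻¹' K) = -K := rfl
      rw [h2] at h
      rw [← h]
      simpa using hx
    have := hconv.interior hx hx' (by norm_num : (0:ℝ) ≤ 1/2) (by norm_num : (0:ℝ) ≤ 1/2)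
      (by norm_num)
    simpa using this
  -- F p p > 0 on the frontier
  have hFpos : ∀ p ∈ frontier K, 0 < F p p := by
    intro p hp
    obtain ⟨ε, hε, hball⟩ := Metric.isOpen_iff.1 isOpen_interior 0 hK0
    have h1 : (1:ℝ)/2 < ‖F p‖ := by rw [hFnorm p hp]; norm_num
    obtain ⟨x, hx1, hx2⟩ := (F p).exists_lt_apply_of_lt_opNorm h1
    rcases le_or_gt (F p x) 0 with hle | hlt
    · have hx2' : (1:ℝ)/2 < F p (-x) := by
        rw [map_neg]
        rcases abs_cases (F p x) with ⟨h, _⟩ | ⟨h, _⟩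
        · rw [Real.norm_eq_abs, h] at hx2; linarith
        · rw [Real.norm_eq_abs, h] at hx2; linarith
      have hmem : (ε/2) • (-x) ∈ K := by
        apply interior_subset
        apply hball
        simp only [Metric.mem_ball, dist_zero_right, norm_smul, Real.norm_eq_abs,
          abs_of_pos (by linarith : (0:ℝ) < ε/2), norm_neg]
        nlinarith
      have := hFsupp p hp _ hmem
      rw [map_smul] at this
      simp only [smul_eq_mul] at this
      nlinarith
    · have hmem : (ε/2) • x ∈ K := by
        apply interior_subset
        apply hball
        simp only [Metric.mem_ball, dist_zero_right, norm_smul, Real.norm_eq_abs,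
          abs_of_pos (by linarith : (0:ℝ) < ε/2)]
        nlinarith
      have := hFsupp p hp _ hmem
      rw [map_smul] at this
      simp only [smul_eq_mul] at this
      nlinarith
  -- separability gives nonpositivity of F y x for distinct x, y in S
  have hC : ∀ x ∈ S, ∀ y ∈ S, x ≠ y → F y x ≤ 0 := by
    intro x hx y hy hxy
    by_contra hpos
    push_neg at hpos
    exact hsep x hx y hy hxy ⟨hS hx, hpos,
      hFsupp y (hS hy) x (hcomp.isClosed.frontier_subset (hS hx))⟩
  -- reduce to the triangle {a, b, c}
  have habc : ({a, b, c} : Set (EuclideanSpace ℝ (Fin 2))) ⊆ S := by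
    intro x hx
    rcases hx with rfl | rfl | rfl <;> assumption
  refine convexHull_mono habc ?_
  by_contra h0
  obtain ⟨f, u, hfu, hf⟩ := geometric_hahn_banach_point_closed
    (convex_convexHull ℝ _)
    (((Set.finite_singleton c).insert b |>.insert a).isClosed_convexHull (𝕜 := ℝ)) h0
  rw [map_zero] at hfu
  have hfa : 0 < f a := lt_trans hfu (hf a (subset_convexHull ℝ _ (by simp)))
  have hfb : 0 < f b := lt_trans hfu (hf b (subset_convexHull ℝ _ (by simp)))
  have hfc : 0 < f c := lt_trans hfu (hf c (subset_convexHull ℝ _ (by simp)))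
  -- the key contradiction: no point of S is a nonnegative combination of two others
  have key : ∀ x ∈ S, ∀ y ∈ S, ∀ z ∈ S, x ≠ y → z ≠ y → ∀ s t : ℝ, 0 ≤ s → 0 ≤ t →
      y = s • x + t • z → False := by
    intro x hx y hy z hz hxy hzy s t hs ht heq
    have h1 : 0 < F y y := hFpos y (hS hy)
    have h2 : F y x ≤ 0 := hC x hx y hy hxy
    have h3 : F y z ≤ 0 := hC z hz y hy hzy
    have h4 := congrArg (F y) heq
    rw [map_add, map_smul, map_smul] at h4
    simp only [smul_eq_mul] at h4
    nlinarith
  set P : ℝ := a 0 * b 1 - a 1 * b 0 with hP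
  set Q : ℝ := b 0 * c 1 - b 1 * c 0 with hQ
  set R : ℝ := a 0 * c 1 - a 1 * c 0 with hR
  have hvec : R • b = Q • a + P • c := sep_cramer a b c
  have hfrel : R * f b = Q * f a + P * f c := by
    have h := congrArg f hvec
    rw [map_smul, map_add, map_smul, map_smul] at h
    simpa using h
  have hbne : b ≠ 0 := fun h => by rw [h, map_zero] at hfb; exact lt_irrefl 0 hfb
  have hcne : c ≠ 0 := fun h => by rw [h, map_zero] at hfc; exact lt_irrefl 0 hfc
  rcases eq_or_ne P 0 with hP0 | hPn
  · -- a parallel to b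
    obtain ⟨r, hr⟩ := sep_parallel a b hbne (by rw [hP] at hP0; linarith [hP0])
    have hfr : f a = r * f b := by rw [hr, map_smul]; simp
    have hrpos : 0 ≤ r := by nlinarith
    exact key b hbS a haS c hcS hab.symm hac.symm r 0 hrpos le_rfl (by simp [hr])
  rcases eq_or_ne Q 0 with hQ0 | hQn
  · -- b parallel to c
    obtain ⟨r, hr⟩ := sep_parallel b c hcne (by rw [hQ] at hQ0; linarith [hQ0])
    have hfr : f b = r * f c := by rw [hr, map_smul]; simp
    have hrpos : 0 ≤ r := by nlinarith
    exact key c hcS b hbS a haS hbc.symm hab r 0 hrpos le_rfl (by simp [hr])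
  rcases eq_or_ne R 0 with hR0 | hRn
  · -- a parallel to c
    obtain ⟨r, hr⟩ := sep_parallel a c hcne (by rw [hR] at hR0; linarith [hR0])
    have hfr : f a = r * f c := by rw [hr, map_smul]; simp
    have hrpos : 0 ≤ r := by nlinarith
    exact key c hcS a haS b hbS hac.symm hab.symm r 0 hrpos le_rfl (by simp [hr])
  -- all three determinants are nonzero
  have hva : Q • a = R • b + (-P) • c := by
    rw [neg_smul, ← sub_eq_add_neg]
    exact eq_sub_of_add_eq hvec.symm
  have hvc : P • c = (-Q) • a + R • b := by
    rw [neg_smul, neg_add_eq_sub]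
    rw [eq_sub_iff_add_eq, add_comm]
    exact hvec.symm
  rcases hRn.lt_or_gt with hRneg | hRpos
  · rcases hQn.lt_or_gt with hQneg | hQpos
    · rcases hPn.lt_or_gt with hPneg | hPpos
      · -- all negative: b is in the cone of a, c
        exact key a haS b hbS c hcS hab hbc.symm (Q/R) (P/R)
          (by rw [div_nonneg_iff]; right; exact ⟨hQneg.le, hRneg.le⟩)
          (by rw [div_nonneg_iff]; right; exact ⟨hPneg.le, hRneg.le⟩)
          (sep_expand hRn hvec)
      · -- a is in the cone of b, c
        exact key b hbS a haS c hcS hab.symm hac.symm (R/Q) ((-P)/Q)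
          (by rw [div_nonneg_iff]; right; exact ⟨hRneg.le, hQneg.le⟩)
          (by rw [div_nonneg_iff]; right; exact ⟨by linarith, hQneg.le⟩)
          (sep_expand hQn hva)
    · rcases hPn.lt_or_gt with hPneg | hPpos
      · -- c is in the cone of a, b
        exact key a haS c hcS b hbS hac hbc (((-Q))/P) (R/P)
          (by rw [div_nonneg_iff]; right; exact ⟨by linarith, hPneg.le⟩)
          (by rw [div_nonneg_iff]; right; exact ⟨hRneg.le, hPneg.le⟩)
          (sep_expand hPn hvc)
      · -- impossible sign pattern
        linarith [hfrel, mul_neg_of_neg_of_pos hRneg hfb, mul_pos hQpos hfa, mul_pos hPpos hfc]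
  · rcases hQn.lt_or_gt with hQneg | hQpos
    · rcases hPn.lt_or_gt with hPneg | hPpos
      · -- impossible sign pattern
        linarith [hfrel, mul_pos hRpos hfb, mul_neg_of_neg_of_pos hQneg hfa,
          mul_neg_of_neg_of_pos hPneg hfc]
      · -- c is in the cone of a, b
        exact key a haS c hcS b hbS hac hbc (((-Q))/P) (R/P)
          (by rw [div_nonneg_iff]; left; exact ⟨by linarith, hPpos.le⟩)
          (by rw [div_nonneg_iff]; left; exact ⟨hRpos.le, hPpos.le⟩)
          (sep_expand hPn hvc)
    · rcases hPn.lt_or_gt with hPneg | hPpos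
      · -- a is in the cone of b, c
        exact key b hbS a haS c hcS hab.symm hac.symm (R/Q) ((-P)/Q)
          (by rw [div_nonneg_iff]; left; exact ⟨hRpos.le, hQpos.le⟩)
          (by rw [div_nonneg_iff]; left; exact ⟨by linarith, hQpos.le⟩)
          (sep_expand hQn hva)
      · -- all positive: b is in the cone of a, c
        exact key a haS b hbS c hcS hab hbc.symm (Q/R) (P/R)
          (by rw [div_nonneg_iff]; left; exact ⟨hQpos.le, hRpos.le⟩)
          (by rw [div_nonneg_iff]; left; exact ⟨hPpos.le, hRpos.le⟩)
          (sep_expand hRn hvec)
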